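/- Let f be a ϑ-self-concordant barrier on an open convex domain D_f ⊆ R_{>0}^n, and set K = 4ϑ + 1. Suppose x ∈ D_f is such that for all i ∈ [n], both x + (K+1)x_i e_i ∈ D_f and x − (1/2)x_i e_i ∈ D_f. Then H(x) ≼ 4nK^2 Diag(1/x_1^2, …, 1/x_n^2). -/

import Mathlib

/-- Local quadratic form `v ↦ vᵀ H v` induced by a Hessian matrix `H`. -/
noncomputable def quadForm {n : ℕ} (H : Matrix (Fin n) (Fin n) ℝ) (v : Fin n → ℝ) : ℝ :=
  dotProduct v (H.mulVec v)

lemma quadForm_nonneg {n : ℕ} {M : Matrix (Fin n) (Fin n) ℝ} (hM : M.PosDef) (v : Fin n → ℝ) :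
    0 ≤ quadForm M v := by
  by_cases hv : v = 0
  · simp [quadForm, hv]
  · have := hM.dotProduct_mulVec_pos hv
    simpa [quadForm] using this.le

lemma quadForm_pos {n : ℕ} {M : Matrix (Fin n) (Fin n) ℝ} (hM : M.PosDef) {v : Fin n → ℝ}
    (hv : v ≠ 0) : 0 < quadForm M v := by
  have := hM.dotProduct_mulVec_pos hv
  simpa [quadForm] using this

lemma quadForm_smul {n : ℕ} (M : Matrix (Fin n) (Fin n) ℝ) (c : ℝ) (v : Fin n → ℝ) :
    quadForm M (c • v) = c ^ 2 * quadForm M v := by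
  simp [quadForm, Matrix.mulVec_smul, dotProduct_smul, smul_dotProduct,
    smul_eq_mul]
  ring

lemma dot_symm {n : ℕ} {M : Matrix (Fin n) (Fin n) ℝ} (hM : M.IsHermitian)
    (a b : Fin n → ℝ) : dotProduct a (M.mulVec b) = dotProduct b (M.mulVec a) := by
  have h : ∀ i j, M i j = M j i := by
    intro i j
    have := congrFun (congrFun hM j) i
    simpa [Matrix.conjTranspose_apply] using this
  simp only [dotProduct, Matrix.mulVec, dotProduct, Finset.mul_sum]
  rw [Finset.sum_comm]
  refine Finset.sum_congr rfl fun j _ => Finset.sum_congr rfl fun i _ => ?_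
  rw [h i j]; ring

lemma mono_aux {φ ψ φ' ψ' : ℝ → ℝ} {a b : ℝ} (hab : a ≤ b)
    (hφ : ∀ t ∈ Set.Icc a b, HasDerivAt φ (φ' t) t)
    (hψ : ∀ t ∈ Set.Icc a b, HasDerivAt ψ (ψ' t) t)
    (h : ∀ t ∈ Set.Icc a b, ψ' t ≤ φ' t) :
    ψ b - ψ a ≤ φ b - φ a := by
  have key : MonotoneOn (fun t => φ t - ψ t) (Set.Icc a b) := by
    apply monotoneOn_of_deriv_nonneg (convex_Icc a b)
    · exact fun t ht => ((hφ t ht).sub (hψ t ht)).continuousAt.continuousWithinAt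
    · intro t ht
      rw [interior_Icc] at ht
      exact (((hφ t (Set.Ioo_subset_Icc_self ht)).sub
        (hψ t (Set.Ioo_subset_Icc_self ht))).differentiableAt).differentiableWithinAt
    · intro t ht
      rw [interior_Icc] at ht
      have hd := ((hφ t (Set.Ioo_subset_Icc_self ht)).sub
        (hψ t (Set.Ioo_subset_Icc_self ht))).deriv
      rw [show (fun t => φ t - ψ t) = φ - ψ from rfl, hd]
      have := h t (Set.Ioo_subset_Icc_self ht)
      linarith
  have := key (Set.left_mem_Icc.2 hab) (Set.right_mem_Icc.2 hab) hab
  simp only at this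
  linarith

lemma bilin_cs {n : ℕ} {M : Matrix (Fin n) (Fin n) ℝ} (hM : M.PosDef) (u w : Fin n → ℝ) :
    (dotProduct u (M.mulVec w)) ^ 2 ≤ quadForm M u * quadForm M w := by
  set B := dotProduct u (M.mulVec w) with hB
  have h : ∀ t : ℝ, 0 ≤ quadForm M u * (t * t) + (2 * B) * t + quadForm M w := by
    intro t
    have hq : quadForm M (t • u + w) =
        quadForm M u * (t * t) + (2 * B) * t + quadForm M w := by
      have hsym := dot_symm hM.1 w u
      simp only [quadForm, Matrix.mulVec_add, Matrix.mulVec_smul, dotProduct_add,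
        add_dotProduct, dotProduct_smul, smul_dotProduct, smul_eq_mul]
      rw [← hB]
      have : dotProduct w (M.mulVec u) = B := by rw [hsym, hB]
      rw [this]
      ring
    rw [← hq]
    exact quadForm_nonneg hM _
  have hd := discrim_le_zero h
  rw [discrim] at hd
  nlinarith [hd]

lemma quadForm_single{n : ℕ} (M : Matrix (Fin n) (Fin n) ℝ) (i : Fin n) :
    quadForm M (Pi.single i 1) = M i i := by
  simp [quadForm, Matrix.mulVec_single, single_dotProduct]

lemma grad_cs {n : ℕ} {M : Matrix (Fin n) (Fin n) ℝ} (hM : M.PosDef) {gz : Fin n → ℝ} {θ : ℝ}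
    (hθ : quadForm M (M⁻¹.mulVec gz) ≤ θ) (w : Fin n → ℝ) :
    (dotProduct gz w) ^ 2 ≤ θ * quadForm M w := by
  have hdet : IsUnit M.det := hM.det_pos.ne'.isUnit
  set u := M⁻¹.mulVec gz with hu
  have hMu : M.mulVec u = gz := by
    rw [hu, Matrix.mulVec_mulVec, Matrix.mul_nonsing_inv _ hdet, Matrix.one_mulVec]
  have h1 : dotProduct gz w = dotProduct u (M.mulVec w) := by
    rw [← hMu, dotProduct_comm, dot_symm hM.1]
  rw [h1]
  calc (dotProduct u (M.mulVec w)) ^ 2 ≤ quadForm M u * quadForm M w := bilin_cs hM u w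
    _ ≤ θ * quadForm M w := by
        have := quadForm_nonneg hM w
        nlinarith

lemma hasDerivAt_line {n : ℕ} {D : Set (Fin n → ℝ)}
    {g : (Fin n → ℝ) → (Fin n → ℝ)} {H : (Fin n → ℝ) → Matrix (Fin n) (Fin n) ℝ}
    (hHess : ∀ x ∈ D, ∀ v w : Fin n → ℝ,
      fderiv ℝ (fun y => dotProduct (g y) v) x w = dotProduct v ((H x).mulVec w))
    (hposdef : ∀ x ∈ D, (H x).PosDef)
    (x v : Fin n → ℝ) (t : ℝ) (ht : x + t • v ∈ D) :
    HasDerivAt (fun s : ℝ => dotProduct (g (x + s • v)) v)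
      (quadForm (H (x + t • v)) v) t := by
  by_cases hv : v = 0
  · subst hv
    simp only [dotProduct_zero, quadForm, Matrix.mulVec_zero]
    exact hasDerivAt_const t 0
  · set z := x + t • v with hz
    set F := fun y : Fin n → ℝ => dotProduct (g y) v with hF
    have hdiff : DifferentiableAt ℝ F z := by
      by_contra hnd
      have h0 : fderiv ℝ F z = 0 := fderiv_zero_of_not_differentiableAt hnd
      have := hHess z ht v v
      rw [h0] at this
      simp only [ContinuousLinearMap.zero_apply] at this
      have hp : 0 < quadForm (H z) v := quadForm_pos (hposdef z ht) hv
      rw [quadForm] at hp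
      linarith [this ▸ hp]
    have hline : HasDerivAt (fun s : ℝ => x + s • v) v t := by
      simpa using ((hasDerivAt_id t).smul_const v).const_add x
    have hcomp := (hdiff.hasFDerivAt.comp_hasDerivAt t hline)
    have heq : fderiv ℝ F z v = quadForm (H z) v := by
      rw [hHess z ht v v]; rfl
    rw [heq] at hcomp
    exact hcomp

lemma barrier_ineq {n : ℕ} {D : Set (Fin n → ℝ)}
    {g : (Fin n → ℝ) → (Fin n → ℝ)} {H : (Fin n → ℝ) → Matrix (Fin n) (Fin n) ℝ} {θ : ℝ}
    (hconv : Convex ℝ D)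
    (hHess : ∀ x ∈ D, ∀ v w : Fin n → ℝ,
      fderiv ℝ (fun y => dotProduct (g y) v) x w = dotProduct v ((H x).mulVec w))
    (hposdef : ∀ x ∈ D, (H x).PosDef)
    (hθ : ∀ x ∈ D, quadForm (H x) ((H x)⁻¹.mulVec (g x)) ≤ θ)
    {z y : Fin n → ℝ} (hz : z ∈ D) (hy : y ∈ D) :
    dotProduct (g z) (y - z) ≤ θ := by
  have hθ0 : 0 ≤ θ := le_trans (quadForm_nonneg (hposdef z hz) _) (hθ z hz)
  set v := y - z with hv
  by_contra hcon
  push_neg at hcon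
  -- membership along the segment
  have hmem : ∀ t ∈ Set.Icc (0:ℝ) 1, z + t • v ∈ D := by
    intro t ht
    have : z + t • v = (1 - t) • z + t • y := by
      ext i
      simp [hv, Pi.smul_apply, Pi.sub_apply, smul_eq_mul]
      ring
    rw [this]
    exact hconv hz hy (by linarith [ht.1, ht.2]) ht.1 (by ring)
  set ψ := fun t : ℝ => dotProduct (g (z + t • v)) v with hψdef
  set q := fun t : ℝ => quadForm (H (z + t • v)) v with hqdef
  have hψd : ∀ t ∈ Set.Icc (0:ℝ) 1, HasDerivAt ψ (q t) t := fun t ht =>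
    hasDerivAt_line hHess hposdef z v t (hmem t ht)
  have hψ0 : ψ 0 = dotProduct (g z) v := by
    simp only [hψdef, zero_smul, add_zero]
  have hψ0pos : θ < ψ 0 := by rw [hψ0]; exact hcon
  have hqnn : ∀ t ∈ Set.Icc (0:ℝ) 1, 0 ≤ q t := fun t ht =>
    quadForm_nonneg (hposdef _ (hmem t ht)) v
  -- ψ is monotone-ish: ψ 0 ≤ ψ t on [0,1]
  have hmono : ∀ t ∈ Set.Icc (0:ℝ) 1, ψ 0 ≤ ψ t := by
    intro t ht
    have sub : Set.Icc (0:ℝ) t ⊆ Set.Icc 0 1 := Set.Icc_subset_Icc le_rfl ht.2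
    have := mono_aux (φ := ψ) (ψ := fun _ => (0:ℝ)) (φ' := q) (ψ' := fun _ => 0) ht.1
      (fun s hs => hψd s (sub hs)) (fun s _ => hasDerivAt_const s 0)
      (fun s hs => hqnn s (sub hs))
    simpa using this
  have hψpos : ∀ t ∈ Set.Icc (0:ℝ) 1, 0 < ψ t := fun t ht =>
    lt_of_le_of_lt hθ0 (lt_of_lt_of_le hψ0pos (hmono t ht))
  -- θ must be positive
  have hcs : ∀ t ∈ Set.Icc (0:ℝ) 1, (ψ t) ^ 2 ≤ θ * q t := fun t ht =>
    grad_cs (hposdef _ (hmem t ht)) (hθ _ (hmem t ht)) v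
  have hθpos : 0 < θ := by
    rcases lt_or_eq_of_le hθ0 with h | h
    · exact h
    · exfalso
      have := hcs 0 (by norm_num)
      have h0 := hψpos 0 (by norm_num)
      nlinarith [hqnn 0 (by norm_num : (0:ℝ) ∈ Set.Icc (0:ℝ) 1)]
  set t₀ := θ / ψ 0 with ht₀
  have ht₀pos : 0 < t₀ := div_pos hθpos (lt_trans hθpos hψ0pos)
  have ht₀lt : t₀ < 1 := (div_lt_one (lt_trans hθpos hψ0pos)).2 hψ0pos
  have subt₀ : Set.Icc (0:ℝ) t₀ ⊆ Set.Icc 0 1 := Set.Icc_subset_Icc le_rfl ht₀lt.le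
  -- w = -(ψ)⁻¹ has derivative q/ψ² ≥ 1/θ
  have hw : ∀ t ∈ Set.Icc (0:ℝ) t₀,
      HasDerivAt (fun s => -(ψ s)⁻¹) (q t / (ψ t) ^ 2) t := by
    intro t ht
    have hne : ψ t ≠ 0 := (hψpos t (subt₀ ht)).ne'
    have := ((hψd t (subt₀ ht)).inv hne).neg
    refine this.congr_deriv ?_
    ring
  have hlow : ∀ t ∈ Set.Icc (0:ℝ) t₀, 1 / θ ≤ q t / (ψ t) ^ 2 := by
    intro t ht
    have h1 := hcs t (subt₀ ht)
    have h2 := hψpos t (subt₀ ht)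
    rw [div_le_div_iff₀ hθpos (by positivity)]
    linarith
  have hlin : ∀ t ∈ Set.Icc (0:ℝ) t₀, HasDerivAt (fun s : ℝ => s / θ) (1 / θ) t := by
    intro t _
    simpa using (hasDerivAt_id t).div_const θ
  have key := mono_aux (φ := fun s => -(ψ s)⁻¹) (ψ := fun s => s / θ)
    (φ' := fun t => q t / (ψ t) ^ 2) (ψ' := fun _ => 1 / θ) ht₀pos.le hw hlin hlow
  -- key : t₀/θ - 0 ≤ -(ψ t₀)⁻¹ - (-(ψ 0)⁻¹)
  have hval : t₀ / θ = (ψ 0)⁻¹ := by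
    rw [ht₀, div_div, mul_comm, ← div_div, div_self hθpos.ne', one_div]
  have hψt₀ : 0 < ψ t₀ := hψpos t₀ (subt₀ (Set.right_mem_Icc.2 ht₀pos.le))
  have hpos : (0:ℝ) < (ψ t₀)⁻¹ := by positivity
  have key2 : t₀ / θ - 0 / θ ≤ -(ψ t₀)⁻¹ - -(ψ 0)⁻¹ := key
  rw [hval] at key2
  simp only [zero_div] at key2
  linarith

set_option maxHeartbeats 1000000 in
lemma renegar {n : ℕ} {D : Set (Fin n → ℝ)}
    {g : (Fin n → ℝ) → (Fin n → ℝ)} {H : (Fin n → ℝ) → Matrix (Fin n) (Fin n) ℝ} {θ K : ℝ}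
    (hconv : Convex ℝ D)
    (hHess : ∀ x ∈ D, ∀ v w : Fin n → ℝ,
      fderiv ℝ (fun y => dotProduct (g y) v) x w = dotProduct v ((H x).mulVec w))
    (hposdef : ∀ x ∈ D, (H x).PosDef)
    (hsc1 : ∀ x ∈ D, ∀ y : Fin n → ℝ, quadForm (H x) (y - x) < 1 → y ∈ D)
    (hsc2 : ∀ x ∈ D, ∀ y : Fin n → ℝ, quadForm (H x) (y - x) < 1 →
      ∀ v : Fin n → ℝ, v ≠ 0 →
        1 - Real.sqrt (quadForm (H x) (y - x)) ≤
            Real.sqrt (quadForm (H y) v) / Real.sqrt (quadForm (H x) v) ∧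
        Real.sqrt (quadForm (H y) v) / Real.sqrt (quadForm (H x) v) ≤
            1 / (1 - Real.sqrt (quadForm (H x) (y - x))))
    (hθ : ∀ x ∈ D, quadForm (H x) ((H x)⁻¹.mulVec (g x)) ≤ θ)
    (hK : K = 4 * θ + 1)
    {x y : Fin n → ℝ} (hx : x ∈ D) (hy : y ∈ D)
    (hgxy : 0 ≤ dotProduct (g x) (y - x)) :
    quadForm (H x) (y - x) ≤ K ^ 2 := by
  have hθ0 : 0 ≤ θ := le_trans (quadForm_nonneg (hposdef x hx) _) (hθ x hx)
  have hK1 : 1 ≤ K := by rw [hK]; linarith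
  set v := y - x with hv
  set Q := quadForm (H x) v with hQ
  have hQ0 : 0 ≤ Q := quadForm_nonneg (hposdef x hx) v
  by_cases hQ1 : Q ≤ 1
  · nlinarith
  push_neg at hQ1
  -- r = sqrt Q
  set r := Real.sqrt Q with hr
  have hr1 : 1 < r := by
    have : Real.sqrt 1 < Real.sqrt Q := Real.sqrt_lt_sqrt (by norm_num) hQ1
    simpa using this
  have hr0 : 0 < r := by linarith
  have hr2 : r ^ 2 = Q := Real.sq_sqrt hQ0
  have hvne : v ≠ 0 := by
    intro h
    rw [hQ, h] at hQ1
    simp [quadForm] at hQ1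
    linarith
  set t₁ : ℝ := 1 / (2 * r) with ht₁
  have ht₁pos : 0 < t₁ := by positivity
  have ht₁r : t₁ * r = 1 / 2 := by rw [ht₁]; field_simp; try ring
  have ht₁half : t₁ < 1 / 2 := by
    rw [ht₁]
    rw [div_lt_div_iff₀ (by positivity) (by norm_num)]
    linarith
  clear_value v Q r t₁
  -- membership along [0, t₁]
  have hmem : ∀ t ∈ Set.Icc (0:ℝ) t₁, x + t • v ∈ D := by
    intro t ht
    apply hsc1 x hx
    have h1 : x + t • v - x = t • v := add_sub_cancel_left x (t • v)
    rw [h1, quadForm_smul, ← hQ]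
    have htr : t * r ≤ 1 / 2 := by
      calc t * r ≤ t₁ * r := by nlinarith [ht.2, hr0]
        _ = 1 / 2 := ht₁r
    have h4 : (t * r) ^ 2 ≤ 1 / 4 := by nlinarith [mul_nonneg ht.1 hr0.le]
    have h5 : t ^ 2 * Q = (t * r) ^ 2 := by rw [← hr2]; ring
    rw [h5]
    linarith
  -- Hessian lower bound along the segment
  have hqlow : ∀ t ∈ Set.Icc (0:ℝ) t₁,
      (1 - t * r) ^ 2 * r ^ 2 ≤ quadForm (H (x + t • v)) v := by
    intro t ht
    have hsub : x + t • v - x = t • v := add_sub_cancel_left x (t • v)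
    have hqxv : quadForm (H x) (x + t • v - x) = t ^ 2 * Q := by
      rw [hsub, quadForm_smul, hQ]
    have htr : t * r ≤ 1 / 2 := by
      calc t * r ≤ t₁ * r := by nlinarith [ht.2, hr0]
        _ = 1 / 2 := ht₁r
    have hlt : quadForm (H x) (x + t • v - x) < 1 := by
      rw [hqxv]
      have h4 : (t * r) ^ 2 ≤ 1 / 4 := by nlinarith [mul_nonneg ht.1 hr0.le]
      have h5 : t ^ 2 * Q = (t * r) ^ 2 := by rw [← hr2]; ring
      rw [h5]; linarith
    have := (hsc2 x hx (x + t • v) hlt v hvne).1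
    rw [hqxv] at this
    have hsq : Real.sqrt (t ^ 2 * Q) = t * r := by
      rw [Real.sqrt_mul (sq_nonneg t), Real.sqrt_sq ht.1, ← hr]
    rw [hsq] at this
    rw [← hQ, ← hr] at this
    -- this : 1 - t*r ≤ sqrt(q t) / r
    have hq0 : 0 ≤ quadForm (H (x + t • v)) v :=
      quadForm_nonneg (hposdef _ (hmem t ht)) v
    have h2 : (1 - t * r) * r ≤ Real.sqrt (quadForm (H (x + t • v)) v) :=
      (le_div_iff₀ hr0).1 this
    have ha : 0 ≤ (1 - t * r) * r := mul_nonneg (by linarith) hr0.le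
    have hsq2 := mul_self_le_mul_self ha h2
    rw [Real.mul_self_sqrt hq0] at hsq2
    nlinarith [hsq2]
  -- derivative comparison
  set φ := fun t : ℝ => dotProduct (g (x + t • v)) v with hφ
  have hφd : ∀ t ∈ Set.Icc (0:ℝ) t₁, HasDerivAt φ (quadForm (H (x + t • v)) v) t :=
    fun t ht => hasDerivAt_line hHess hposdef x v t (hmem t ht)
  set χ := fun t : ℝ => -(r / 3) * (1 - r * t) ^ 3 with hχ
  have hχd : ∀ t : ℝ, HasDerivAt χ ((1 - t * r) ^ 2 * r ^ 2) t := by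
    intro t
    have h1 : HasDerivAt (fun s : ℝ => 1 - r * s) (-r) t := by
      simpa using ((hasDerivAt_id t).const_mul r).const_sub 1
    have h2 := (h1.pow 3).const_mul (-(r / 3))
    refine h2.congr_deriv ?_
    norm_num
    ring
  clear_value φ χ
  have hcomp := mono_aux (φ := φ) (ψ := χ) ht₁pos.le hφd (fun t _ => hχd t) hqlow
  have hrt₁ : r * t₁ = 1 / 2 := by rw [mul_comm]; exact ht₁r
  have hχval : χ t₁ - χ 0 = 7 * r / 24 := by
    simp only [hχ]
    rw [hrt₁]
    ring
  have hφ0 : φ 0 = dotProduct (g x) v := by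
    simp only [hφ, zero_smul, add_zero]
  have hφt₁ : 7 * r / 24 ≤ φ t₁ := by
    have h0 : 0 ≤ φ 0 := by rw [hφ0]; exact hgxy
    linarith [hcomp, hχval]
  -- barrier inequality at z = x + t₁ • v
  have hzD : x + t₁ • v ∈ D := hmem t₁ ⟨ht₁pos.le, le_rfl⟩
  have hbar := barrier_ineq hconv hHess hposdef hθ hzD hy
  have hyz : y - (x + t₁ • v) = (1 - t₁) • v := by
    ext i
    simp [hv, Pi.smul_apply, smul_eq_mul]
    ring
  rw [hyz] at hbar
  have hdot : dotProduct (g (x + t₁ • v)) ((1 - t₁) • v) = (1 - t₁) * φ t₁ := by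
    simp [hφ, dotProduct_smul, smul_eq_mul]
  rw [hdot] at hbar
  have h1t₁ : 1 / 2 < 1 - t₁ := by linarith
  have hchain : (1 - t₁) * (7 * r / 24) ≤ θ := by nlinarith [hφt₁, hbar, h1t₁, hr0]
  have hexp : (1 - t₁) * (7 * r / 24) = 7 * r / 24 - 7 / 48 := by
    rw [ht₁]; field_simp; ring
  have hrK : r ≤ K := by rw [hK]; linarith [hchain, hexp, hθ0]
  nlinarith [hr2, hr0, hK1]

/-- Hessian upper bound `H(x) ≼ 4nK² Diag(1/x²)` with `K = 4ϑ+1`, for a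
ϑ-self-concordant barrier whose domain lies in the positive orthant, at a point `x` that
is well inside the domain. -/
theorem stmt3 (n : ℕ) (D : Set (Fin n → ℝ)) (f : (Fin n → ℝ) → ℝ)
    (g : (Fin n → ℝ) → (Fin n → ℝ))
    (H : (Fin n → ℝ) → Matrix (Fin n) (Fin n) ℝ)
    (θ : ℝ)
    (hopen : IsOpen D) (hconv : Convex ℝ D)
    (hDpos : ∀ x ∈ D, ∀ i, 0 < x i)
    (hf : ContDiffOn ℝ 2 f D)
    (hgrad : ∀ x ∈ D, ∀ v : Fin n → ℝ, fderiv ℝ f x v = dotProduct (g x) v)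
    (hHess : ∀ x ∈ D, ∀ v w : Fin n → ℝ,
      fderiv ℝ (fun y => dotProduct (g y) v) x w = dotProduct v ((H x).mulVec w))
    (hposdef : ∀ x ∈ D, (H x).PosDef)
    (hsc1 : ∀ x ∈ D, ∀ y : Fin n → ℝ, quadForm (H x) (y - x) < 1 → y ∈ D)
    (hsc2 : ∀ x ∈ D, ∀ y : Fin n → ℝ, quadForm (H x) (y - x) < 1 →
      ∀ v : Fin n → ℝ, v ≠ 0 →
        1 - Real.sqrt (quadForm (H x) (y - x)) ≤
            Real.sqrt (quadForm (H y) v) / Real.sqrt (quadForm (H x) v) ∧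
        Real.sqrt (quadForm (H y) v) / Real.sqrt (quadForm (H x) v) ≤
            1 / (1 - Real.sqrt (quadForm (H x) (y - x))))
    (hθ : ∀ x ∈ D, quadForm (H x) ((H x)⁻¹.mulVec (g x)) ≤ θ)
    (K : ℝ) (hK : K = 4 * θ + 1)
    (x : Fin n → ℝ) (hx : x ∈ D)
    (hx1 : ∀ i : Fin n, x + ((K + 1) * x i) • (Pi.single i 1 : Fin n → ℝ) ∈ D)
    (hx2 : ∀ i : Fin n, x - ((1 / 2) * x i) • (Pi.single i 1 : Fin n → ℝ) ∈ D) :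
    ∀ z : Fin n → ℝ,
      quadForm (H x) z ≤ 4 * (n : ℝ) * K ^ 2 * ∑ i, (z i / x i) ^ 2 := by
  have hMpd := hposdef x hx
  have hθ0 : 0 ≤ θ := le_trans (quadForm_nonneg hMpd _) (hθ x hx)
  have hK1 : 1 ≤ K := by rw [hK]; linarith
  have hdiag0 : ∀ i, 0 ≤ (H x) i i := by
    intro i
    have := quadForm_nonneg hMpd (Pi.single i 1)
    rwa [quadForm_single] at this
  have hdiag : ∀ i, (H x) i i * (x i) ^ 2 ≤ 4 * K ^ 2 := by
    intro i
    have hxi := hDpos x hx i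
    set e := (Pi.single i 1 : Fin n → ℝ) with he
    have heq : quadForm (H x) e = (H x) i i := quadForm_single _ i
    by_cases hge : 0 ≤ dotProduct (g x) e
    · have hy := hx1 i
      have hsub : x + ((K + 1) * x i) • e - x = ((K + 1) * x i) • e :=
        add_sub_cancel_left _ _
      have hdotpos : 0 ≤ dotProduct (g x)
          (x + ((K + 1) * x i) • e - x) := by
        rw [hsub, dotProduct_smul, smul_eq_mul]
        have hKp : 0 < (K + 1) * x i := by nlinarith
        exact mul_nonneg hKp.le hge
      have hre := renegar hconv hHess hposdef hsc1 hsc2 hθ hK hx hy hdotpos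
      rw [hsub, quadForm_smul, heq] at hre
      nlinarith [hdiag0 i, sq_nonneg (x i), sq_nonneg K, hre, hxi]
    · push_neg at hge
      have hy := hx2 i
      have hsub : x - ((1 / 2) * x i) • e - x = -(((1 / 2) * x i) • e) := by
        abel
      have hdotpos : 0 ≤ dotProduct (g x)
          (x - ((1 / 2) * x i) • e - x) := by
        rw [hsub, ← neg_smul, dotProduct_smul, smul_eq_mul]
        have : 0 < x i := hxi
        nlinarith
      have hre := renegar hconv hHess hposdef hsc1 hsc2 hθ hK hx hy hdotpos
      rw [hsub, ← neg_smul, quadForm_smul, heq] at hre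
      nlinarith [hdiag0 i, hre, hxi]
  intro z
  have hij : ∀ i j, |(H x) i j| ≤ Real.sqrt ((H x) i i) * Real.sqrt ((H x) j j) := by
    intro i j
    have hcs := bilin_cs hMpd (Pi.single i 1) (Pi.single j 1)
    rw [quadForm_single, quadForm_single] at hcs
    have hent : dotProduct (Pi.single i 1 : Fin n → ℝ)
        ((H x).mulVec (Pi.single j 1)) = (H x) i j := by
      simp [Matrix.mulVec_single, single_dotProduct]
    rw [hent] at hcs
    have h1 : |(H x) i j| = Real.sqrt (((H x) i j) ^ 2) := (Real.sqrt_sq_eq_abs _).symm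
    rw [h1, ← Real.sqrt_mul (hdiag0 i)]
    exact Real.sqrt_le_sqrt hcs
  have expand : quadForm (H x) z = ∑ i, ∑ j, z i * ((H x) i j * z j) := by
    simp [quadForm, dotProduct, Matrix.mulVec, Finset.mul_sum]
  have step1 : quadForm (H x) z ≤
      (∑ i, |z i| * Real.sqrt ((H x) i i)) ^ 2 := by
    rw [expand, sq, Finset.sum_mul_sum]
    apply Finset.sum_le_sum
    intro i _
    apply Finset.sum_le_sum
    intro j _
    calc z i * ((H x) i j * z j) ≤ |z i * ((H x) i j * z j)| := le_abs_self _
      _ = |z i| * |(H x) i j| * |z j| := by rw [abs_mul, abs_mul]; ring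
      _ ≤ |z i| * (Real.sqrt ((H x) i i) * Real.sqrt ((H x) j j)) * |z j| := by
          exact mul_le_mul_of_nonneg_right
            (mul_le_mul_of_nonneg_left (hij i j) (abs_nonneg _)) (abs_nonneg _)
      _ = |z i| * Real.sqrt ((H x) i i) * (|z j| * Real.sqrt ((H x) j j)) := by
          ring
  have step2 : (∑ i, |z i| * Real.sqrt ((H x) i i)) ^ 2 ≤
      (n : ℝ) * ∑ i, (z i) ^ 2 * (H x) i i := by
    have h := sq_sum_le_card_mul_sum_sq (s := (Finset.univ : Finset (Fin n)))
      (f := fun i => |z i| * Real.sqrt ((H x) i i))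
    have hcard : ((Finset.univ : Finset (Fin n)).card : ℝ) = (n : ℝ) := by
      simp
    have hsq : ∀ i, (|z i| * Real.sqrt ((H x) i i)) ^ 2 = (z i) ^ 2 * (H x) i i := by
      intro i
      rw [mul_pow, sq_abs, Real.sq_sqrt (hdiag0 i)]
    calc (∑ i, |z i| * Real.sqrt ((H x) i i)) ^ 2
        ≤ ((Finset.univ : Finset (Fin n)).card : ℝ) *
          ∑ i, (|z i| * Real.sqrt ((H x) i i)) ^ 2 := h
      _ = (n : ℝ) * ∑ i, (z i) ^ 2 * (H x) i i := by
          rw [hcard]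
          congr 1
          exact Finset.sum_congr rfl fun i _ => hsq i
  have step3 : ∑ i, (z i) ^ 2 * (H x) i i ≤ ∑ i, 4 * K ^ 2 * (z i / x i) ^ 2 := by
    apply Finset.sum_le_sum
    intro i _
    have hxi := hDpos x hx i
    have hd := hdiag i
    have hxp : (0:ℝ) < (x i) ^ 2 := by positivity
    rw [div_pow, ← sub_nonneg]
    have key : 4 * K ^ 2 * ((z i) ^ 2 / (x i) ^ 2) - (z i) ^ 2 * (H x) i i =
        ((z i) ^ 2 / (x i) ^ 2) * (4 * K ^ 2 - (H x) i i * (x i) ^ 2) := by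
      field_simp
    rw [key]
    exact mul_nonneg (by positivity) (by linarith)
  calc quadForm (H x) z ≤ (∑ i, |z i| * Real.sqrt ((H x) i i)) ^ 2 := step1
    _ ≤ (n : ℝ) * ∑ i, (z i) ^ 2 * (H x) i i := step2
    _ ≤ (n : ℝ) * ∑ i, 4 * K ^ 2 * (z i / x i) ^ 2 := by
        apply mul_le_mul_of_nonneg_left step3 (Nat.cast_nonneg n)
    _ = 4 * (n : ℝ) * K ^ 2 * ∑ i, (z i / x i) ^ 2 := by
        rw [Finset.mul_sum, Finset.mul_sum]
        exact Finset.sum_congr rfl fun i _ => by ring
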